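/- There exists a constant $C > 0$ such that for all $\nu \geq 1$ and all $z$ with $0 < |z| < 1/2$, $|\overline{\partial} f_\nu(z)| \leq C$, where $f_\nu(z) = z|z|^{1/\nu}\log\log|z|^{-2}$; i.e. the sup-norms $\|\overline{\partial} f_\nu\|_{C^0(B_{1/2})}$ are bounded uniformly in $\nu$. -/

import Mathlib

open Complex Metric Topology

/-- The Wirtinger derivative `∂̄ = ½(∂ₓ + i ∂_y)` of a map `ℂ → ℂ`. -/
noncomputable def dbar (f : ℂ → ℂ) (z : ℂ) : ℂ :=
  (1/2 : ℂ) * (fderiv ℝ f z 1 + Complex.I * fderiv ℝ f z Complex.I)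

lemma ue_le_one (u : ℝ) : u * Real.exp (-u) ≤ 1 := by
  have h := Real.add_one_le_exp u
  have hp := Real.exp_pos u
  have hu : u ≤ Real.exp u := by linarith
  rw [Real.exp_neg]
  calc u * (Real.exp u)⁻¹ ≤ Real.exp u * (Real.exp u)⁻¹ :=
        mul_le_mul_of_nonneg_right hu (by positivity)
    _ = 1 := mul_inv_cancel₀ hp.ne'

lemma T_gt_one {r : ℝ} (hr : 0 < r) (hr2 : r < 1/2) : 1 < Real.log (r ^ (-2:ℝ)) := by
  have hpow : r ^ (-2:ℝ) = (r^2)⁻¹ := by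
    rw [Real.rpow_neg hr.le, show (2:ℝ) = ((2:ℕ):ℝ) by norm_num, Real.rpow_natCast]
  have h2 : r^2 ≤ 1/4 := by nlinarith
  have h4 : (4:ℝ) ≤ r ^ (-2:ℝ) := by
    rw [hpow]
    calc (4:ℝ) = (1/4 : ℝ)⁻¹ := by norm_num
      _ ≤ (r^2)⁻¹ := by
        apply inv_anti₀ (by positivity) h2
  rw [Real.lt_log_iff_exp_lt (by positivity)]
  have := Real.exp_one_lt_d9
  linarith

lemma key_ineq {a r : ℝ} (ha : 0 < a) (hr : 0 < r) (hr2 : r < 1/2) :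
    a * r ^ a * Real.log (Real.log (r ^ (-2:ℝ))) ≤ 2 := by
  set T := Real.log (r ^ (-2:ℝ)) with hT
  have hT1 : 1 < T := T_gt_one hr hr2
  have hlogr : Real.log r < 0 := Real.log_neg hr (by linarith)
  set t : ℝ := -Real.log r with htdef
  have ht : 0 < t := by simp [htdef]; linarith
  have hTt : T = 2 * t := by
    rw [hT, Real.log_rpow hr]; ring
  have hra : r ^ a = Real.exp (-(a*t)) := by
    rw [Real.rpow_def_of_pos hr]
    congr 1
    simp [htdef]; ring
  have hlogT : Real.log T ≤ T := by
    have := Real.log_le_sub_one_of_pos (show (0:ℝ) < T by linarith)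
    linarith
  have hLpos : 0 ≤ Real.log T := Real.log_nonneg hT1.le
  have h1 : a * r ^ a * Real.log T ≤ a * Real.exp (-(a*t)) * (2*t) := by
    rw [hra]
    have he : (0:ℝ) ≤ a * Real.exp (-(a*t)) := by positivity
    calc a * Real.exp (-(a*t)) * Real.log T ≤ a * Real.exp (-(a*t)) * T :=
          mul_le_mul_of_nonneg_left hlogT he
      _ = a * Real.exp (-(a*t)) * (2*t) := by rw [hTt]
  have h2 : a * t * Real.exp (-(a*t)) ≤ 1 := ue_le_one (a*t)
  nlinarith [Real.exp_pos (-(a*t))]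

lemma key_ineq2 {a r : ℝ} (ha : 0 < a) (hr : 0 < r) (hr2 : r < 1/2) :
    r ^ a * Real.log (Real.log (r ^ (-2:ℝ))) ≤ (4/a) * r ^ (a/2) := by
  set T := Real.log (r ^ (-2:ℝ)) with hT
  have hT1 : 1 < T := T_gt_one hr hr2
  have hlogr : Real.log r < 0 := Real.log_neg hr (by linarith)
  set t : ℝ := -Real.log r with htdef
  have ht : 0 < t := by simp [htdef]; linarith
  have hTt : T = 2 * t := by rw [hT, Real.log_rpow hr]; ring
  have hra : r ^ a = Real.exp (-(a*t)) := by
    rw [Real.rpow_def_of_pos hr]; congr 1; simp [htdef]; ring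
  have hra2 : r ^ (a/2) = Real.exp (-(a*t/2)) := by
    rw [Real.rpow_def_of_pos hr]; congr 1; simp [htdef]; ring
  have hlogT : Real.log T ≤ T := by
    have := Real.log_le_sub_one_of_pos (show (0:ℝ) < T by linarith)
    linarith
  have hsplit : Real.exp (-(a*t)) = Real.exp (-(a*t/2)) * Real.exp (-(a*t/2)) := by
    rw [← Real.exp_add]; congr 1; ring
  have h2 : (a*t/2) * Real.exp (-(a*t/2)) ≤ 1 := ue_le_one _
  have hLpos : 0 ≤ Real.log T := Real.log_nonneg hT1.le
  have h1 : r ^ a * Real.log T ≤ Real.exp (-(a*t)) * (2*t) := by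
    rw [hra]
    calc Real.exp (-(a*t)) * Real.log T ≤ Real.exp (-(a*t)) * T :=
          mul_le_mul_of_nonneg_left hlogT (by positivity)
      _ = Real.exp (-(a*t)) * (2*t) := by rw [hTt]
  rw [hra2]
  have hep : (0:ℝ) < Real.exp (-(a*t/2)) := Real.exp_pos _
  have h3 : Real.exp (-(a*t)) * (2*t) ≤ (4/a) * Real.exp (-(a*t/2)) := by
    rw [hsplit]
    have hta : t * Real.exp (-(a*t/2)) ≤ 2/a := by
      calc t * Real.exp (-(a*t/2)) = (2/a) * (a*t/2 * Real.exp (-(a*t/2))) := by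
            field_simp
        _ ≤ (2/a) * 1 := mul_le_mul_of_nonneg_left h2 (by positivity)
        _ = 2/a := mul_one _
    rw [div_mul_eq_mul_div, le_div_iff₀ ha]
    have h := (le_div_iff₀ ha).mp hta
    nlinarith [mul_le_mul_of_nonneg_left h (by positivity : (0:ℝ) ≤ 2*Real.exp (-(a*t/2)))]
  exact h1.trans h3

noncomputable def D1 (z : ℂ) : ℂ →L[ℝ] ℝ :=
  (‖z‖)⁻¹ • (z.re • Complex.reCLM + z.im • Complex.imCLM)

lemma hasFDerivAt_cabs {z : ℂ} (hz : z ≠ 0) :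
    HasFDerivAt (fun w : ℂ => ‖w‖) (D1 z) z := by
  have hs : Complex.normSq z ≠ 0 := by simpa [Complex.normSq_eq_zero] using hz
  have hq : HasFDerivAt (fun w : ℂ => w.re * w.re + w.im * w.im)
      ((z.re • Complex.reCLM + z.re • Complex.reCLM) +
        (z.im • Complex.imCLM + z.im • Complex.imCLM)) z :=
    (Complex.reCLM.hasFDerivAt.mul Complex.reCLM.hasFDerivAt).add
      (Complex.imCLM.hasFDerivAt.mul Complex.imCLM.hasFDerivAt)
  have h := (Real.hasDerivAt_sqrt hs).comp_hasFDerivAt z (by have hn : (⇑Complex.normSq) = fun w : ℂ => w.re * w.re + w.im * w.im := funext Complex.normSq_apply; rw [hn]; exact hq)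
  have habs : (fun w : ℂ => ‖w‖) = fun w => Real.sqrt (Complex.normSq w) := by
    funext w; rw [Complex.norm_def]
  rw [habs]
  refine h.congr_fderiv ?_
  have hr : Real.sqrt (Complex.normSq z) = ‖z‖ := (Complex.norm_def z).symm
  ext v
  · simp [D1, hr, Complex.normSq_apply]
    have h2 : Real.sqrt (z.re * z.re + z.im * z.im) = ‖z‖ := by
      rw [Complex.norm_def, Complex.normSq_apply]
    rw [h2]; ring

lemma dbar_eq (a : ℝ) {z : ℂ} (hz : z ≠ 0)
    (hT : Real.log (‖z‖ ^ (-2:ℝ)) ≠ 0) :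
    dbar (fun w : ℂ => w * ((‖w‖ ^ a : ℝ) : ℂ)
        * ((Real.log (Real.log (‖w‖ ^ (-2:ℝ)))) : ℂ)) z
      = (1/2) * z^2 *
        ( ((a * ‖z‖ ^ (a-1) * (‖z‖)⁻¹ : ℝ) : ℂ)
            * ((Real.log (Real.log (‖z‖ ^ (-2:ℝ)))) : ℂ)
          + ((‖z‖ ^ a : ℝ) : ℂ)
            * (((Real.log (‖z‖ ^ (-2:ℝ)))⁻¹
                * ((‖z‖ ^ (-2:ℝ))⁻¹ * (-2 * ‖z‖ ^ ((-2:ℝ)-1)))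
                * (‖z‖)⁻¹ : ℝ) : ℂ) ) := by
  have hr : (0:ℝ) < ‖z‖ := norm_pos_iff.mpr hz
  have hrp : ‖z‖ ^ (-2:ℝ) ≠ 0 := (Real.rpow_pos_of_pos hr _).ne'
  have hg : HasFDerivAt (fun w : ℂ => ‖w‖ ^ a)
      ((a * ‖z‖ ^ (a-1)) • D1 z) z :=
    (Real.hasDerivAt_rpow_const (Or.inl hr.ne')).comp_hasFDerivAt z (hasFDerivAt_cabs hz)
  have hL1 : HasDerivAt (fun x : ℝ => x ^ (-2:ℝ)) (-2 * ‖z‖ ^ ((-2:ℝ)-1))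
      (‖z‖) := Real.hasDerivAt_rpow_const (Or.inl hr.ne')
  have hL2 : HasDerivAt Real.log (‖z‖ ^ (-2:ℝ))⁻¹ (‖z‖ ^ (-2:ℝ)) :=
    Real.hasDerivAt_log hrp
  have hL3 : HasDerivAt Real.log (Real.log (‖z‖ ^ (-2:ℝ)))⁻¹
      (Real.log (‖z‖ ^ (-2:ℝ))) := Real.hasDerivAt_log hT
  have hLchain : HasDerivAt (fun x : ℝ => Real.log (Real.log (x ^ (-2:ℝ))))
      ((Real.log (‖z‖ ^ (-2:ℝ)))⁻¹
        * ((‖z‖ ^ (-2:ℝ))⁻¹ * (-2 * ‖z‖ ^ ((-2:ℝ)-1))))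
      (‖z‖) := by
    have := hL3.comp (‖z‖) (hL2.comp (‖z‖) hL1)
    exact this
  have hl : HasFDerivAt (fun w : ℂ => Real.log (Real.log (‖w‖ ^ (-2:ℝ))))
      (((Real.log (‖z‖ ^ (-2:ℝ)))⁻¹
        * ((‖z‖ ^ (-2:ℝ))⁻¹ * (-2 * ‖z‖ ^ ((-2:ℝ)-1)))) • D1 z) z :=
    hLchain.comp_hasFDerivAt z (hasFDerivAt_cabs hz)
  have hgc : HasFDerivAt (fun w : ℂ => ((‖w‖ ^ a : ℝ) : ℂ))
      (Complex.ofRealCLM.comp ((a * ‖z‖ ^ (a-1)) • D1 z)) z := by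
    have := Complex.ofRealCLM.hasFDerivAt.comp z hg
    exact this
  have hlc : HasFDerivAt (fun w : ℂ => ((Real.log (Real.log (‖w‖ ^ (-2:ℝ)))) : ℂ))
      (Complex.ofRealCLM.comp
        (((Real.log (‖z‖ ^ (-2:ℝ)))⁻¹
          * ((‖z‖ ^ (-2:ℝ))⁻¹ * (-2 * ‖z‖ ^ ((-2:ℝ)-1)))) • D1 z)) z := by
    have := Complex.ofRealCLM.hasFDerivAt.comp z hl
    exact this
  have hmul1 := (hasFDerivAt_id z).mul hgc
  have hfull := hmul1.mul hlc
  simp only [id, Pi.mul_apply] at hfull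
  have hfull' : HasFDerivAt (fun w : ℂ => w * ((‖w‖ ^ a : ℝ) : ℂ)
      * ((Real.log (Real.log (‖w‖ ^ (-2:ℝ)))) : ℂ)) _ z := hfull
  rw [dbar, hfull'.fderiv]
  simp only [ContinuousLinearMap.add_apply, ContinuousLinearMap.smul_apply,
    ContinuousLinearMap.comp_apply, ContinuousLinearMap.coe_smul', Pi.smul_apply,
    D1, ContinuousLinearMap.id_apply, Complex.ofRealCLM_apply,
    Complex.reCLM_apply, Complex.imCLM_apply, smul_eq_mul,
    Complex.one_re, Complex.one_im, Complex.I_re, Complex.I_im]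
  set x := z.re with hx
  set y := z.im with hy
  set R : ℝ := (‖z‖)⁻¹ with hR
  set G : ℝ := ‖z‖ ^ a with hG
  set Lc : ℝ := Real.log (Real.log (‖z‖ ^ (-2:ℝ))) with hLc
  set cg : ℝ := a * ‖z‖ ^ (a-1) with hcg
  set cl : ℝ := (Real.log (‖z‖ ^ (-2:ℝ)))⁻¹
          * ((‖z‖ ^ (-2:ℝ))⁻¹ * (-2 * ‖z‖ ^ ((-2:ℝ)-1))) with hcl
  have hzxy : z = (x:ℂ) + (y:ℂ)*Complex.I := (Complex.re_add_im z).symm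
  push_cast
  rw [hzxy]
  linear_combination ((G:ℂ) * (Lc:ℂ) / 2) * Complex.I_sq

lemma bound_ne (a : ℝ) (ha : 0 < a) (ha1 : a ≤ 1) {z : ℂ} (hz : z ≠ 0)
    (habs : ‖z‖ < 1/2) :
    ‖dbar (fun w : ℂ => w * ((‖w‖ ^ a : ℝ) : ℂ)
        * ((Real.log (Real.log (‖w‖ ^ (-2:ℝ)))) : ℂ)) z‖ ≤ 3 := by
  have hr : (0:ℝ) < ‖z‖ := norm_pos_iff.mpr hz
  have hT1 : 1 < Real.log (‖z‖ ^ (-2:ℝ)) := T_gt_one hr habs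
  rw [dbar_eq a hz (by linarith)]
  set r := ‖z‖ with hrdef
  set T := Real.log (r ^ (-2:ℝ)) with hTdef
  set L := Real.log T with hLdef
  have hP : r ^ (-2:ℝ) ≠ 0 := (Real.rpow_pos_of_pos hr _).ne'
  have hTpos : (0:ℝ) < T := lt_trans one_pos hT1
  set A : ℝ := a * r^(a-1) * r⁻¹ * L
      + r^a * (T⁻¹ * ((r^(-2:ℝ))⁻¹ * (-2 * r^((-2:ℝ)-1))) * r⁻¹) with hAdef
  have hX : ((a * r^(a-1) * r⁻¹ : ℝ):ℂ) * (L:ℂ)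
      + ((r^a :ℝ):ℂ) * ((T⁻¹ * ((r^(-2:ℝ))⁻¹ * (-2 * r^((-2:ℝ)-1))) * r⁻¹ : ℝ):ℂ)
      = ((A : ℝ) : ℂ) := by rw [hAdef]; push_cast; ring
  rw [hX]
  simp only [norm_mul, norm_pow, Complex.norm_real, Real.norm_eq_abs]
  rw [← hrdef]
  have habs12 : ‖(1/2 : ℂ)‖ = 1/2 := by
    rw [norm_div]; simp
  rw [habs12]
  have e1 : r^(a-1) = r^a * r⁻¹ := by
    rw [Real.rpow_sub hr, Real.rpow_one, div_eq_mul_inv]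
  have e2 : r^((-2:ℝ)-1) = r^(-2:ℝ) * r⁻¹ := by
    rw [Real.rpow_sub hr, Real.rpow_one, div_eq_mul_inv]
  have hA : A = r⁻¹ * r⁻¹ * (a * r^a * L - 2 * r^a / T) := by
    rw [hAdef, e1, e2]; field_simp; ring
  have h1 : a * r^a * L ≤ 2 := key_ineq ha hr habs
  have hLpos : 0 ≤ L := Real.log_nonneg hT1.le
  have h1' : 0 ≤ a * r^a * L := by positivity
  have hra1 : r^a ≤ 1 := Real.rpow_le_one hr.le (by linarith) ha.le
  have h2 : 2 * r^a / T ≤ 2 := by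
    rw [div_le_iff₀ hTpos]; nlinarith
  have h2' : 0 ≤ 2 * r^a / T := by positivity
  have hAbs : |A| ≤ r⁻¹ * r⁻¹ * 2 := by
    rw [hA, abs_mul, _root_.abs_of_pos (show (0:ℝ) < r⁻¹*r⁻¹ by positivity)]
    have : |a * r^a * L - 2 * r^a / T| ≤ 2 := abs_le.mpr ⟨by linarith, by linarith⟩
    exact mul_le_mul_of_nonneg_left this (by positivity)
  calc 1/2 * r^2 * |A| ≤ 1/2 * r^2 * (r⁻¹ * r⁻¹ * 2) := by
        apply mul_le_mul_of_nonneg_left hAbs (by positivity)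
    _ = 1 := by field_simp
    _ ≤ 3 := by norm_num

lemma hasFDerivAt_zero' (a : ℝ) (ha : 0 < a) :
    HasFDerivAt (fun w : ℂ => if w = 0 then (0:ℂ)
      else w * ((‖w‖ ^ a : ℝ) : ℂ)
        * ((Real.log (Real.log (‖w‖ ^ (-2:ℝ)))) : ℂ)) (0 : ℂ →L[ℝ] ℂ) 0 := by
  rw [hasFDerivAt_iff_isLittleO_nhds_zero]
  simp only [zero_add, if_pos rfl, if_true, sub_zero, ContinuousLinearMap.zero_apply]
  rw [Asymptotics.isLittleO_iff]
  intro ε hε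
  have hcont : ContinuousAt (fun x : ℝ => x ^ (a/2)) 0 :=
    Real.continuousAt_rpow_const 0 (a/2) (Or.inr (by positivity))
  have htend : Filter.Tendsto (fun w : ℂ => (4/a) * ‖w‖ ^ (a/2)) (𝓝 0) (𝓝 0) := by
    have h1 : Filter.Tendsto (fun w : ℂ => ‖w‖) (𝓝 0) (𝓝 0) := by
      simpa using continuous_norm.tendsto (0:ℂ)
    have h2 := (hcont.tendsto).comp h1
    rw [Real.zero_rpow (by positivity : a/2 ≠ 0)] at h2
    simpa using h2.const_mul (4/a)
  filter_upwards [htend.eventually (gt_mem_nhds hε),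
    Metric.ball_mem_nhds (0:ℂ) (by norm_num : (0:ℝ) < 1/2)] with w h1 h2
  by_cases hw : w = 0
  · simp [hw]
  · rw [if_neg hw]
    have hr : (0:ℝ) < ‖w‖ := norm_pos_iff.mpr hw
    have hrlt : ‖w‖ < 1/2 := by
      simpa [Complex.dist_eq] using Metric.mem_ball.mp h2
    have hT1 : 1 < Real.log (‖w‖ ^ (-2:ℝ)) := T_gt_one hr hrlt
    have hL : 0 ≤ Real.log (Real.log (‖w‖ ^ (-2:ℝ))) := Real.log_nonneg hT1.le
    have hkey := key_ineq2 ha hr hrlt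
    have heq : ‖w * ((‖w‖ ^ a : ℝ) : ℂ)
        * ((Real.log (Real.log (‖w‖ ^ (-2:ℝ)))) : ℂ)‖
        = ‖w‖ * (‖w‖ ^ a
            * Real.log (Real.log (‖w‖ ^ (-2:ℝ)))) := by
      simp only [norm_mul, Complex.norm_real, Real.norm_eq_abs]
      rw [_root_.abs_of_nonneg (by positivity : (0:ℝ) ≤ ‖w‖ ^ a),
        _root_.abs_of_nonneg hL]
      ring
    rw [heq]
    calc ‖w‖ * (‖w‖ ^ a * Real.log (Real.log (‖w‖ ^ (-2:ℝ))))
        ≤ ‖w‖ * ((4/a) * ‖w‖ ^ (a/2)) :=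
          mul_le_mul_of_nonneg_left hkey hr.le
      _ ≤ ‖w‖ * ε := mul_le_mul_of_nonneg_left h1.le hr.le
      _ = ε * ‖w‖ := mul_comm _ _

/-- The sup-norms `‖∂̄ f_ν‖_{C⁰(B_{1/2})}` of
`f_ν(z) = z |z|^{1/ν} log log |z|⁻²` (extended by `0` at the origin)
are bounded uniformly in `ν`. -/
theorem stmt11 :
    ∃ C > (0 : ℝ), ∀ ν : ℕ, 1 ≤ ν → ∀ z ∈ ball (0 : ℂ) (1/2),
      ‖dbar (fun w : ℂ => if w = 0 then (0 : ℂ)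
          else w * ((‖w‖ ^ ((1 : ℝ)/ν) : ℝ) : ℂ)
            * (Real.log (Real.log (‖w‖ ^ (-2 : ℝ))) : ℂ)) z‖ ≤ C := by
  refine ⟨3, by norm_num, ?_⟩
  intro ν hν z hz
  have hν' : (1:ℝ) ≤ (ν:ℝ) := by exact_mod_cast hν
  have hνpos : (0:ℝ) < ν := by linarith
  set a : ℝ := (1:ℝ)/ν with ha_def
  have ha : 0 < a := by rw [ha_def]; positivity
  have ha1 : a ≤ 1 := by rw [ha_def, div_le_one hνpos]; linarith
  by_cases hz0 : z = 0
  · subst hz0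
    have h0 := (hasFDerivAt_zero' a ha).fderiv
    rw [dbar, h0]
    simp
  · have habs : ‖z‖ < 1/2 := by
      simpa [Complex.dist_eq] using mem_ball.mp hz
    have hev : (fun w : ℂ => if w = 0 then (0:ℂ)
          else w * ((‖w‖ ^ a : ℝ):ℂ)
            * ((Real.log (Real.log (‖w‖ ^ (-2:ℝ)))):ℂ))
        =ᶠ[𝓝 z] (fun w : ℂ => w * ((‖w‖ ^ a : ℝ):ℂ)
            * ((Real.log (Real.log (‖w‖ ^ (-2:ℝ)))):ℂ)) := by
      filter_upwards [isOpen_compl_singleton.mem_nhds hz0] with w hw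
      simp only [Set.mem_compl_iff, Set.mem_singleton_iff] at hw
      rw [if_neg hw]
    have hdb : dbar (fun w : ℂ => if w = 0 then (0:ℂ)
          else w * ((‖w‖ ^ a : ℝ):ℂ)
            * ((Real.log (Real.log (‖w‖ ^ (-2:ℝ)))):ℂ)) z
        = dbar (fun w : ℂ => w * ((‖w‖ ^ a : ℝ):ℂ)
            * ((Real.log (Real.log (‖w‖ ^ (-2:ℝ)))):ℂ)) z := by
      simp only [dbar]; rw [hev.fderiv_eq]
    rw [hdb]
    exact bound_ne a ha ha1 hz0 habs
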